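/- Let Θ be a measurable space and let θ, θ^(1), …, θ^(k) be k+1 independent and identically distributed Θ-valued random variables on a common probability space. Fix an initial state x̂_0 in a measurable space 𝒳, controls u_0, …, u_{N−1}, and a dynamics map f such that each map ϑ ↦ x_j(ϑ) is measurable, where x_0(ϑ) = x̂_0 and x_{j+1}(ϑ) = f(x_j(ϑ), u_j, ϑ). Let h : 𝒳 → ℝ be measurable, define the non-conformity score ρ(ϑ) = −min_{j=0,…,N} h(x_j(ϑ)), let ρ^((r)) denote the r-th order statistic of ρ(θ^(1)), …, ρ(θ^(k)) with the convention ρ^((k+1)) = +∞, and set r = ⌈(k+1)(1−δ)⌉ for δ ∈ (0,1). Then the probability of the event { ρ^((r)) > 0 } ∪ { x_j(θ) ∈ C for all j = 0, …, N } is at least 1 − δ; that is, with probability at least 1 − δ, whenever the calibrated threshold satisfies ρ^((r)) ≤ 0 the true trajectory remains in the safe set C = {x ∈ 𝒳 : h(x) ≥ 0} at every step of the horizon. -/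

import Mathlib

open MeasureTheory ProbabilityTheory
open scoped ENNReal

/-- The `r`-th smallest value (1-indexed) among the `k` values `v 0, …, v (k-1)`. -/
noncomputable def orderStat {k : ℕ} (r : ℕ) (v : Fin k → ℝ) : ℝ :=
  ((List.ofFn v).insertionSort (· ≤ ·)).getD (r - 1) 0



lemma countP_ofFn {n : ℕ} (v : Fin n → ℝ) (p : ℝ → Prop) [DecidablePred p] :
    (List.ofFn v).countP (fun b => p b) = (Finset.univ.filter fun i => p (v i)).card := by
  induction n with
  | zero => simp
  | succ n ih =>
    rw [List.ofFn_succ, List.countP_cons, Finset.card_filter, Fin.sum_univ_succ,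
      ← Finset.card_filter, ← ih (fun i => v i.succ)]
    by_cases h : p (v 0) <;> simp [h, Nat.add_comm]

-- all elements of take r are ≤ l[r-1], given sorted, 1 ≤ r ≤ length
lemma take_le_sorted {l : List ℝ} (hs : l.Pairwise (· ≤ ·)) {r : ℕ} (hr1 : 1 ≤ r)
    (hrl : r ≤ l.length) {b : ℝ} (hb : b ∈ l.take r) : b ≤ l[r-1]'(by omega) := by
  rw [List.mem_take_iff_getElem] at hb
  obtain ⟨i, hi, rfl⟩ := hb
  have hi' : i < l.length := by simp at hi; omega
  exact hs.rel_get_of_le (a := ⟨i, hi'⟩) (b := ⟨r-1, by omega⟩) (by simp at hi ⊢; omega)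

lemma drop_ge_sorted {l : List ℝ} (hs : l.Pairwise (· ≤ ·)) {r : ℕ} (hr1 : 1 ≤ r)
    (hrl : r ≤ l.length) {b : ℝ} (hb : b ∈ l.drop (r-1)) : l[r-1]'(by omega) ≤ b := by
  rw [List.mem_iff_getElem] at hb
  obtain ⟨i, hi, rfl⟩ := hb
  rw [List.getElem_drop]
  exact hs.rel_get_of_le (a := ⟨r-1, by omega⟩)
    (b := ⟨r-1+i, by simp at hi; omega⟩) (by simp)

lemma le_orderStat_of_count {k r : ℕ} (hr1 : 1 ≤ r) (hrk : r ≤ k) (v : Fin k → ℝ) (a : ℝ)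
    (hcard : (Finset.univ.filter fun i => v i < a).card ≤ r - 1) :
    a ≤ orderStat r v := by
  set l := (List.ofFn v).insertionSort (· ≤ ·) with hl
  have hlen : l.length = k := by simp [hl]
  have hs : l.Pairwise (· ≤ ·) := List.pairwise_insertionSort _ _
  have hperm : l.Perm (List.ofFn v) := List.perm_insertionSort _ _
  have hcount : l.countP (fun b => b < a) = (Finset.univ.filter fun i => v i < a).card := by
    rw [hperm.countP_eq, countP_ofFn]
  have hget : orderStat r v = l[r-1]'(by omega) := by
    rw [orderStat, ← hl, List.getD_eq_getElem l 0 (by omega)]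
  by_contra hlt
  push_neg at hlt
  rw [hget] at hlt
  -- then all of take r are < a, so countP ≥ r
  have h1 : (l.take r).countP (fun b => b < a) = r := by
    rw [List.countP_eq_length.mpr, List.length_take]
    · omega
    · intro b hb
      simpa using lt_of_le_of_lt (take_le_sorted hs hr1 (by omega) hb) hlt
  have h2 : r ≤ l.countP (fun b => b < a) := by
    conv_rhs => rw [← List.take_append_drop r l]
    rw [List.countP_append, h1]
    omega
  omega

lemma rank_count {n r : ℕ} (hr1 : 1 ≤ r) (hrn : r ≤ n) (y : Fin n → ℝ) :
    r ≤ (Finset.univ.filter fun j =>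
      (Finset.univ.filter fun i => y i < y j).card ≤ r - 1).card := by
  set l := (List.ofFn y).insertionSort (· ≤ ·) with hl
  have hlen : l.length = n := by simp [hl]
  have hs : l.Pairwise (· ≤ ·) := List.pairwise_insertionSort _ _
  have hperm : l.Perm (List.ofFn y) := List.perm_insertionSort _ _
  set t : ℝ := l[r-1]'(by omega) with ht
  -- (1) at least r indices j have y j ≤ t
  have h1 : r ≤ (Finset.univ.filter fun j => y j ≤ t).card := by
    rw [← countP_ofFn y (fun b => b ≤ t), ← hperm.countP_eq]
    have htake : (l.take r).countP (fun b => b ≤ t) = r := by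
      rw [List.countP_eq_length.mpr, List.length_take]
      · omega
      · intro b hb
        simpa using take_le_sorted hs hr1 (by omega) hb
    conv_rhs => rw [← List.take_append_drop r l]
    rw [List.countP_append, htake]
    omega
  -- (2) fewer than r values are < t
  have h2 : (Finset.univ.filter fun i => y i < t).card ≤ r - 1 := by
    rw [← countP_ofFn y (fun b => b < t), ← hperm.countP_eq]
    have hdrop : (l.drop (r-1)).countP (fun b => b < t) = 0 := by
      rw [List.countP_eq_zero]
      intro b hb
      simpa using drop_ge_sorted hs hr1 (by omega) hb
    have htk : (l.take (r-1)).countP (fun b => b < t) ≤ r - 1 := by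
      calc (l.take (r-1)).countP (fun b => b < t) ≤ (l.take (r-1)).length :=
            List.countP_le_length
        _ ≤ r - 1 := by rw [List.length_take]; omega
    conv_lhs => rw [← List.take_append_drop (r-1) l]
    rw [List.countP_append, hdrop]
    omega
  -- combine: {j | y j ≤ t} ⊆ {j | rank j ≤ r-1}
  refine le_trans h1 (Finset.card_le_card ?_)
  intro j hj
  simp only [Finset.mem_filter, Finset.mem_univ, true_and] at hj ⊢
  refine le_trans (le_trans (Finset.card_le_card ?_) le_rfl) h2
  intro i hi
  simp only [Finset.mem_filter, Finset.mem_univ, true_and] at hi ⊢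
  exact lt_of_lt_of_le hi hj

lemma meas_count {n r : ℕ} (j : Fin (m+1)) :
    MeasurableSet {y : Fin (m+1) → ℝ |
      (Finset.univ.filter fun i => y i < y j).card ≤ r - 1} := by
  have hm : Measurable fun y : Fin (m+1) → ℝ =>
      (Finset.univ.filter fun i => y i < y j).card := by
    simp only [Finset.card_filter]
    exact Finset.measurable_sum _ fun i _ =>
      Measurable.ite (measurableSet_lt (measurable_pi_apply i) (measurable_pi_apply j))
        measurable_const measurable_const
  exact hm (measurableSet_le measurable_id measurable_const)

lemma pi_perm_invariant {n : ℕ} (ν : Measure ℝ) [IsProbabilityMeasure ν]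
    (σ : Equiv.Perm (Fin (m+1))) :
    (Measure.pi fun _ : Fin (m+1) => ν).map (fun y i => y (σ i)) =
      Measure.pi fun _ : Fin (m+1) => ν := by
  have hT : Measurable fun (y : Fin (m+1) → ℝ) i => y (σ i) :=
    measurable_pi_lambda _ fun i => measurable_pi_apply _
  refine (Measure.pi_eq fun s hs => ?_).symm
  rw [Measure.map_apply hT (MeasurableSet.univ_pi hs)]
  have hpre : (fun (y : Fin (m+1) → ℝ) i => y (σ i)) ⁻¹' Set.pi Set.univ s =
      Set.pi Set.univ fun i => s (σ.symm i) := by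
    ext y
    simp only [Set.mem_preimage, Set.mem_pi, Set.mem_univ, true_implies]
    constructor
    · intro H i; have := H (σ.symm i); simpa using this
    · intro H i; have := H (σ i); simpa using this
  rw [hpre, Measure.pi_pi]
  exact Equiv.prod_comp σ.symm fun i => ν (s i)

lemma conformal_bound {Ω : Type*} [MeasurableSpace Ω] (μ : Measure Ω)
    [IsProbabilityMeasure μ] {m : ℕ} (Y : Fin (m + 1) → Ω → ℝ)
    (hY : ∀ i, Measurable (Y i))
    (hind : iIndepFun Y μ)
    (hid : ∀ i j, IdentDistrib (Y i) (Y j) μ μ)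
    (r : ℕ) (hr1 : 1 ≤ r) (hrn : r ≤ m + 1) :
    (r : ℝ≥0∞) ≤ (m + 1) *
      μ {ω | (Finset.univ.filter fun i => Y i ω < Y 0 ω).card ≤ r - 1} := by
  classical
  set Φ : Ω → (Fin (m+1) → ℝ) := fun ω i => Y i ω with hΦ
  have hΦm : Measurable Φ := measurable_pi_lambda _ hY
  set ν : Measure ℝ := μ.map (Y 0) with hν
  have : IsProbabilityMeasure ν := Measure.isProbabilityMeasure_map (hY 0).aemeasurable
  set P : Measure (Fin (m+1) → ℝ) := Measure.pi fun _ => ν with hP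
  -- the joint law is the product measure
  have hlaw : P = μ.map Φ := by
    refine Measure.pi_eq fun s hs => ?_
    rw [Measure.map_apply hΦm (MeasurableSet.univ_pi hs)]
    have hpre : Φ ⁻¹' Set.pi Set.univ s = ⋂ i, Y i ⁻¹' s i := by
      ext ω; simp [Φ, Set.mem_pi]
    rw [hpre]
    have h1 : μ (⋂ i, Y i ⁻¹' s i) = ∏ i, μ (Y i ⁻¹' s i) := by
      have := (iIndepFun_iff_measure_inter_preimage_eq_mul.mp hind)
        Finset.univ (fun i _ => hs i)
      simpa using this
    rw [h1]
    refine Finset.prod_congr rfl fun i _ => ?_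
    rw [hν, ← (hid i 0).map_eq, Measure.map_apply (hY i) (hs i)]
  set A : Fin (m+1) → Set (Fin (m+1) → ℝ) := fun j =>
    {y | (Finset.univ.filter fun i => y i < y j).card ≤ r - 1} with hA
  have hAm : ∀ j, MeasurableSet (A j) := fun j => meas_count (n := m+1) (r := r) j
  -- exchangeability: all A j have the same probability
  have hswap : ∀ j, P (A j) = P (A 0) := by
    intro j
    set σ := Equiv.swap (0 : Fin (m+1)) j with hσ
    have hinv := pi_perm_invariant (n := m+1) ν σ
    have hT : Measurable fun (y : Fin (m+1) → ℝ) i => y (σ i) :=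
      measurable_pi_lambda _ fun i => measurable_pi_apply _
    have hpre : (fun (y : Fin (m+1) → ℝ) i => y (σ i)) ⁻¹' A 0 = A j := by
      ext y
      simp only [Set.mem_preimage, hA, Set.mem_setOf_eq]
      have hσ0 : σ 0 = j := Equiv.swap_apply_left _ _
      have hcards : (Finset.univ.filter fun i => y (σ i) < y (σ 0)).card =
          (Finset.univ.filter fun i => y i < y j).card := by
        rw [hσ0, Finset.card_filter, Finset.card_filter]
        exact Equiv.sum_comp σ fun i => if y i < y j then 1 else 0
      rw [← hcards]
    calc P (A j) = P ((fun (y : Fin (m+1) → ℝ) i => y (σ i)) ⁻¹' A 0) := by rw [hpre]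
      _ = ((Measure.pi fun _ : Fin (m+1) => ν).map fun y i => y (σ i)) (A 0) :=
          (Measure.map_apply hT (hAm 0)).symm
      _ = P (A 0) := by rw [hinv]
  -- pointwise: at least r of the events hold
  have hpoint : ∀ y : Fin (m+1) → ℝ,
      (r : ℝ≥0∞) ≤ ∑ j, (A j).indicator (fun _ => (1 : ℝ≥0∞)) y := by
    intro y
    have h1 : ∑ j, (A j).indicator (fun _ => (1 : ℝ≥0∞)) y =
        ((Finset.univ.filter fun j => y ∈ A j).card : ℝ≥0∞) := by
      rw [Finset.card_filter]
      push_cast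
      refine Finset.sum_congr rfl fun j _ => ?_
      by_cases hy : y ∈ A j <;> simp [Set.indicator_apply, hy]
    rw [h1]
    exact_mod_cast rank_count hr1 hrn y
  -- integrate
  have hsum : ∑ j, P (A j) = ∫⁻ y, ∑ j, (A j).indicator (fun _ => (1 : ℝ≥0∞)) y ∂P := by
    rw [lintegral_finset_sum _ fun j _ => measurable_const.indicator (hAm j)]
    refine Finset.sum_congr rfl fun j _ => ?_
    rw [← lintegral_indicator_one (hAm j)]
    rfl
  have hint : (r : ℝ≥0∞) ≤ ∑ j, P (A j) := by
    rw [hsum]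
    calc (r : ℝ≥0∞) = ∫⁻ _, (r : ℝ≥0∞) ∂P := by
          rw [lintegral_const, measure_univ, mul_one]
      _ ≤ _ := lintegral_mono hpoint
  have hconst : ∑ j, P (A j) = ((m+1 : ℕ) : ℝ≥0∞) * P (A 0) := by
    rw [Finset.sum_congr rfl fun j _ => hswap j]
    simp [mul_comm]
  have hA0 : P (A 0) = μ {ω | (Finset.univ.filter fun i => Y i ω < Y 0 ω).card ≤ r - 1} := by
    rw [hlaw, Measure.map_apply hΦm (hAm 0)]
    rfl
  rw [hconst, hA0] at hint
  exact_mod_cast hint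

lemma measurable_finset_inf' {δ : Type*} [MeasurableSpace δ] {ι : Type*} (s : Finset ι)
    (hs : s.Nonempty) (g : ι → δ → ℝ) (hg : ∀ i, Measurable (g i)) :
    Measurable fun a => s.inf' hs fun i => g i a := by
  induction hs using Finset.Nonempty.cons_induction with
  | singleton i =>
    have : (fun a => ({i} : Finset ι).inf' (Finset.singleton_nonempty i) fun j => g j a)
        = g i := by
      funext a; exact Finset.inf'_singleton (f := fun j => g j a)
    rw [this]; exact hg i
  | cons i s his hs ih =>
    have : (fun a => (Finset.cons i s his).inf' (Finset.cons_nonempty his) fun j => g j a)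
        = fun a => min (g i a) (s.inf' hs fun j => g j a) := by
      funext a; exact Finset.inf'_cons hs (fun j => g j a)
    rw [this]; exact (hg i).min ih

/-- **Safety guarantee of conformal trajectory calibration (Theorem 2 of the
paper).**  Let `θ, θ⁽¹⁾, …, θ⁽ᵏ⁾` be i.i.d. parameters, let `ρ` be the
non-conformity score `ρ(ϑ) = -min_{j=0,…,N} h(x_j(ϑ))` of the rolled-out
trajectory, and let `ρ⁽⁽ʳ⁾⁾` be the `r`-th order statistic of
`ρ(θ⁽¹⁾), …, ρ(θ⁽ᵏ⁾)` (equal to `+∞` when `r = k+1`), `r = ⌈(k+1)(1-δ)⌉`.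
Then with probability at least `1 - δ`, either `ρ⁽⁽ʳ⁾⁾ > 0` or the true
trajectory remains in the safe set `C = {x | h x ≥ 0}` at every step. -/
theorem conformal_trajectory_safety
    {Ω : Type*} [MeasurableSpace Ω] (μ : Measure Ω) [IsProbabilityMeasure μ]
    {Θ : Type*} [MeasurableSpace Θ]
    (k : ℕ) (θ : Ω → Θ) (θc : Fin k → Ω → Θ)
    (W : Fin (k + 1) → Ω → Θ) (hW : W = Fin.cons θ θc)
    (hmeas : ∀ i, Measurable (W i))
    (hindep : iIndepFun W μ)
    (hident : ∀ i j : Fin (k + 1), IdentDistrib (W i) (W j) μ μ)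
    {𝒳 : Type*} [MeasurableSpace 𝒳] {U : Type*}
    (xInit : 𝒳) (N : ℕ) (u : ℕ → U) (f : 𝒳 → U → Θ → 𝒳)
    (x : ℕ → Θ → 𝒳)
    (hx0 : ∀ ϑ, x 0 ϑ = xInit)
    (hxs : ∀ j < N, ∀ ϑ, x (j + 1) ϑ = f (x j ϑ) (u j) ϑ)
    (hxmeas : ∀ j ≤ N, Measurable fun ϑ => x j ϑ)
    (h : 𝒳 → ℝ) (hh : Measurable h)
    (C : Set 𝒳) (hC : C = {y | 0 ≤ h y})
    (ρ : Θ → ℝ)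
    (hρ : ∀ ϑ, ρ ϑ =
      -(Finset.univ.inf' Finset.univ_nonempty fun j : Fin (N + 1) => h (x j ϑ)))
    (δ : ℝ) (hδ : δ ∈ Set.Ioo (0 : ℝ) 1)
    (r : ℕ) (hr : r = ⌈((k : ℝ) + 1) * (1 - δ)⌉₊)
    -- the calibrated threshold, with the convention `ρ⁽⁽ᵏ⁺¹⁾⁾ = +∞`
    (thresh : Ω → EReal)
    (hthresh : ∀ ω, thresh ω =
      if r ≤ k then ((orderStat r fun i => ρ (θc i ω) : ℝ) : EReal) else ⊤) :
    ENNReal.ofReal (1 - δ) ≤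
      μ ({ω | 0 < thresh ω} ∪ {ω | ∀ j ≤ N, x j (θ ω) ∈ C}) := by

  classical
  obtain ⟨hδ0, hδ1⟩ := hδ
  have hr1 : 1 ≤ r := by
    rw [hr]
    exact Nat.ceil_pos.mpr (by nlinarith [Nat.cast_nonneg (α := ℝ) k])
  by_cases hrk : r ≤ k
  · -- main case: the order statistic is finite
    -- measurability of the score
    have hxm : ∀ j : Fin (N + 1), Measurable fun ϑ => h (x (j : ℕ) ϑ) :=
      fun j => hh.comp (hxmeas j (Nat.lt_succ_iff.mp j.isLt))
    have hinfm : Measurable fun ϑ =>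
        Finset.univ.inf' Finset.univ_nonempty fun j : Fin (N + 1) => h (x (j : ℕ) ϑ) :=
      measurable_finset_inf' _ _ _ hxm
    have hρmeas : Measurable ρ := by
      have : ρ = fun ϑ =>
          -(Finset.univ.inf' Finset.univ_nonempty fun j : Fin (N + 1) => h (x (j : ℕ) ϑ)) :=
        funext hρ
      rw [this]
      exact hinfm.neg
    -- the i.i.d. scores
    set Y : Fin (k + 1) → Ω → ℝ := fun i ω => ρ (W i ω) with hY
    have hYmeas : ∀ i, Measurable (Y i) := fun i => hρmeas.comp (hmeas i)
    have hYind : iIndepFun Y μ :=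
      hindep.comp (fun _ => ρ) fun _ => hρmeas
    have hYid : ∀ i j : Fin (k + 1), IdentDistrib (Y i) (Y j) μ μ :=
      fun i j => (hident i j).comp hρmeas
    have key := conformal_bound μ Y hYmeas hYind hYid r hr1 (by omega)
    set E : Set Ω :=
      {ω | (Finset.univ.filter fun i => Y i ω < Y 0 ω).card ≤ r - 1} with hE
    -- from `key`, get `ofReal (1 - δ) ≤ μ E`
    have hμE : ENNReal.ofReal (1 - δ) ≤ μ E := by
      have h2 : ENNReal.ofReal (((k : ℝ) + 1) * (1 - δ)) =
          ((k : ℝ≥0∞) + 1) * ENNReal.ofReal (1 - δ) := by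
        rw [ENNReal.ofReal_mul (by positivity), show ((k : ℝ) + 1) = ((k + 1 : ℕ) : ℝ) by
          push_cast; ring, ENNReal.ofReal_natCast]
        push_cast
        ring
      have h1 : ENNReal.ofReal (((k : ℝ) + 1) * (1 - δ)) ≤ (r : ℝ≥0∞) := by
        rw [← ENNReal.ofReal_natCast r]
        refine ENNReal.ofReal_le_ofReal ?_
        rw [hr]
        exact Nat.le_ceil _
      have hmul : ((k : ℝ≥0∞) + 1) * ENNReal.ofReal (1 - δ) ≤ ((k : ℝ≥0∞) + 1) * μ E := by
        calc ((k : ℝ≥0∞) + 1) * ENNReal.ofReal (1 - δ)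
            = ENNReal.ofReal (((k : ℝ) + 1) * (1 - δ)) := h2.symm
          _ ≤ (r : ℝ≥0∞) := h1
          _ ≤ ((k : ℝ≥0∞) + 1) * μ E := key
      exact (ENNReal.mul_le_mul_iff_right (by simp) (by simp)).mp hmul
    -- the event `E` is contained in the target event
    refine le_trans hμE (measure_mono ?_)
    intro ω hω
    have hcard : (Finset.univ.filter fun i : Fin k => ρ (θc i ω) < ρ (θ ω)).card ≤ r - 1 := by
      have hω' : (Finset.univ.filter fun i : Fin (k + 1) => Y i ω < Y 0 ω).card ≤ r - 1 := hω
      rw [Finset.card_filter, Fin.sum_univ_succ] at hω'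
      rw [Finset.card_filter]
      simpa [hY, hW, lt_irrefl] using hω'
    have hle : ρ (θ ω) ≤ orderStat r fun i => ρ (θc i ω) :=
      le_orderStat_of_count hr1 hrk _ _ hcard
    by_cases h0 : 0 < thresh ω
    · exact Or.inl h0
    · push_neg at h0
      rw [hthresh ω, if_pos hrk] at h0
      have hos : (orderStat r fun i => ρ (θc i ω)) ≤ (0 : ℝ) := by
        exact_mod_cast h0
      have hρ0 : ρ (θ ω) ≤ 0 := le_trans hle hos
      rw [hρ (θ ω)] at hρ0
      have hinf : 0 ≤ Finset.univ.inf' Finset.univ_nonempty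
          fun j : Fin (N + 1) => h (x (j : ℕ) (θ ω)) := by linarith
      refine Or.inr fun j hj => ?_
      rw [hC]
      have hji := Finset.inf'_le (f := fun j : Fin (N + 1) => h (x (j : ℕ) (θ ω)))
        (b := (⟨j, by omega⟩ : Fin (N + 1))) (Finset.mem_univ _)
      simp only [Set.mem_setOf_eq]
      calc (0 : ℝ) ≤ _ := hinf
        _ ≤ h (x j (θ ω)) := hji
  · -- degenerate case `r = k + 1`: the threshold is `+∞`
    have huniv : {ω | 0 < thresh ω} = Set.univ := by
      refine Set.eq_univ_of_forall fun ω => ?_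
      simp only [Set.mem_setOf_eq, hthresh ω, if_neg hrk]
      exact EReal.zero_lt_top
    calc ENNReal.ofReal (1 - δ) ≤ 1 := ENNReal.ofReal_le_one.mpr (by linarith)
      _ = μ {ω | 0 < thresh ω} := by rw [huniv, measure_univ]
      _ ≤ _ := measure_mono Set.subset_union_left
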